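/- Let k be a field of characteristic zero and let D = a·∂x + b·∂y be a k-derivation of k[x,y]. Let d be a positive integer with total degree of a and of b both at most d. If there exist N ≥ 2 + d(d+1)/2 irreducible polynomials f₁,…,f_N in k[x,y], pairwise non-proportional, each of which is an eigenvector of D (i.e. D(f_i) = λ_i·f_i for some λ_i ∈ k[x,y]), then D admits a rational first integral: there exist f, g ∈ k[x,y] with g ≠ 0, f not a k-scalar multiple of g, and D(f)·g = f·D(g). -/

import Mathlib

open MvPolynomial

namespace DarbouxAux

variable {k : Type*} [Field k]

lemma topHC_ne_zero {σ R : Type*} [CommSemiring R] {p : MvPolynomial σ R} (hp : p ≠ 0) :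
    homogeneousComponent p.totalDegree p ≠ 0 := by
  obtain ⟨d, hd, hdeg⟩ := Finset.exists_mem_eq_sup p.support
    (support_nonempty.mpr hp) (fun s : σ →₀ ℕ => s.sum fun _ e => e)
  intro h
  have hc := coeff_homogeneousComponent (φ := p) (n := p.totalDegree) d
  rw [h] at hc
  have hdd : d.degree = p.totalDegree := by
    rw [MvPolynomial.totalDegree, hdeg]; rfl
  rw [if_pos hdd] at hc
  exact (mem_support_iff.mp hd) hc.symm

lemma hc_top_mul {σ R : Type*} [CommSemiring R] (p q : MvPolynomial σ R) :
    homogeneousComponent (p.totalDegree + q.totalDegree) (p * q) =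
      homogeneousComponent p.totalDegree p * homogeneousComponent q.totalDegree q := by
  obtain ⟨m, hm⟩ : ∃ m, p.totalDegree = m := ⟨_, rfl⟩
  obtain ⟨n, hn⟩ : ∃ n, q.totalDegree = n := ⟨_, rfl⟩
  rw [hm, hn]
  have hp : p = ∑ i ∈ Finset.range (m + 1), homogeneousComponent i p := by
    rw [← hm]; exact p.sum_homogeneousComponent.symm
  have hq : q = ∑ j ∈ Finset.range (n + 1), homogeneousComponent j q := by
    rw [← hn]; exact q.sum_homogeneousComponent.symm
  conv_lhs => rw [hp, hq]
  rw [Finset.sum_mul_sum, map_sum]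
  have hterm : ∀ i ∈ Finset.range (m + 1), ∀ j ∈ Finset.range (n + 1),
      homogeneousComponent (m + n) (homogeneousComponent i p * homogeneousComponent j q)
        = if i = m ∧ j = n then homogeneousComponent m p * homogeneousComponent n q else 0 := by
    intro i hi j hj
    have hmem : homogeneousComponent i p * homogeneousComponent j q ∈
        homogeneousSubmodule σ R (i + j) := by
      rw [mem_homogeneousSubmodule]
      exact (homogeneousComponent_isHomogeneous i p).mul (homogeneousComponent_isHomogeneous j q)
    rw [homogeneousComponent_of_mem hmem]
    simp only [Finset.mem_range] at hi hj
    by_cases hij : i = m ∧ j = n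
    · rw [if_pos (by omega), if_pos hij, hij.1, hij.2]
    · rw [if_neg (by omega), if_neg hij]
  calc ∑ i ∈ Finset.range (m + 1), homogeneousComponent (m + n)
        (∑ j ∈ Finset.range (n + 1), homogeneousComponent i p * homogeneousComponent j q)
      = ∑ i ∈ Finset.range (m + 1), ∑ j ∈ Finset.range (n + 1),
          (if i = m ∧ j = n then homogeneousComponent m p * homogeneousComponent n q else 0) := by
        refine Finset.sum_congr rfl fun i hi => ?_
        rw [map_sum]
        exact Finset.sum_congr rfl fun j hj => hterm i hi j hj
    _ = homogeneousComponent m p * homogeneousComponent n q := by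
        rw [Finset.sum_eq_single m]
        · rw [Finset.sum_eq_single n]
          · simp
          · intro j hj hjn; rw [if_neg (by tauto)]
          · intro hn'; exact absurd (Finset.self_mem_range_succ n) hn'
        · intro i hi him
          apply Finset.sum_eq_zero
          intro j hj; rw [if_neg (by tauto)]
        · intro hm'; exact absurd (Finset.self_mem_range_succ m) hm'

lemma tdeg_mul {σ R : Type*} [CommRing R] [IsDomain R] {p q : MvPolynomial σ R}
    (hp : p ≠ 0) (hq : q ≠ 0) :
    (p * q).totalDegree = p.totalDegree + q.totalDegree := by
  refine le_antisymm (totalDegree_mul p q) ?_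
  by_contra h
  push_neg at h
  have h2 : homogeneousComponent (p.totalDegree + q.totalDegree) (p * q) = 0 :=
    homogeneousComponent_eq_zero _ _ h
  rw [hc_top_mul] at h2
  exact mul_ne_zero (topHC_ne_zero hp) (topHC_ne_zero hq) h2



lemma finsupp_sum_eq (s : Fin 2 →₀ ℕ) : (s.sum fun _ e => e) = s 0 + s 1 := by
  rw [Finsupp.sum_fintype _ _ (fun _ => rfl), Fin.sum_univ_two]

lemma tdeg_pderiv_le (i : Fin 2) (f : MvPolynomial (Fin 2) k) :
    (pderiv i f).totalDegree ≤ f.totalDegree - 1 := by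
  conv_lhs => rw [f.as_sum, map_sum]
  refine (totalDegree_finset_sum _ _).trans (Finset.sup_le fun v hv => ?_)
  rw [pderiv_monomial]
  by_cases h : v i = 0
  · simp [h]
  · refine (totalDegree_monomial_le _ _).trans ?_
    have h1 : v.sum (fun _ e => e) ≤ f.totalDegree := le_totalDegree hv
    rw [finsupp_sum_eq] at h1
    rw [Finsupp.sum_fintype _ _ (fun _ => rfl), Fin.sum_univ_two]
    simp only [Finsupp.tsub_apply, Finsupp.single_apply, id]
    have hcase : ∀ t : Fin 2, t = 0 ∨ t = 1 := by decide
    rcases hcase i with rfl | rfl <;> simp <;> omega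

lemma pderiv_pderiv {σ R : Type*} [CommSemiring R] (i j : σ) (f : MvPolynomial σ R) :
    pderiv i (pderiv j f) = pderiv j (pderiv i f) := by
  classical
  induction f using MvPolynomial.induction_on with
  | C c => simp
  | add p q hp hq => simp [map_add, hp, hq]
  | mul_X p n ih =>
    have hxn : ∀ l : σ, ∃ c : R, pderiv l (X n : MvPolynomial σ R) = C c := by
      intro l
      by_cases h : n = l
      · subst h; exact ⟨1, by simp [pderiv_X_self]⟩
      · exact ⟨0, by simp [pderiv_X_of_ne h]⟩
    obtain ⟨ci, hci⟩ := hxn i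
    obtain ⟨cj, hcj⟩ := hxn j
    simp only [pderiv_mul, hci, hcj, map_add, map_mul, pderiv_C, ih, mul_zero, add_zero]
    ring

lemma eq_C_of_pderiv_eq_zero [CharZero k] (p : MvPolynomial (Fin 2) k)
    (hp : ∀ i, pderiv i p = 0) : ∃ c : k, p = C c := by
  classical
  refine ⟨coeff 0 p, ?_⟩
  ext s
  rw [coeff_C]
  by_cases hs : (0 : Fin 2 →₀ ℕ) = s
  · rw [if_pos hs, ← hs]
  · rw [if_neg hs]
    have : ∃ i, s i ≠ 0 := by
      by_contra hno
      push_neg at hno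
      exact hs (by ext j; simp [hno j])
    obtain ⟨i, hi⟩ := this
    have hps : pderiv i p = ∑ v ∈ p.support,
        monomial (v - Finsupp.single i 1) (coeff v p * v i) := by
      conv_lhs => rw [p.as_sum, map_sum]
      exact Finset.sum_congr rfl fun v _ => pderiv_monomial
    by_cases hsupp : s ∈ p.support
    · have hco : coeff (s - Finsupp.single i 1) (pderiv i p) = coeff s p * s i := by
        rw [hps, coeff_sum]
        rw [Finset.sum_eq_single s]
        · rw [coeff_monomial, if_pos rfl]
        · intro v hv hvs
          rw [coeff_monomial]
          by_cases hvi : v i = 0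
          · simp [hvi]
          · rw [if_neg ?_]
            intro heq
            apply hvs
            ext l
            by_cases hl : l = i
            · subst hl
              have h9 := congrArg (fun t => t l + 1) heq
              simp [Finsupp.tsub_apply, Finsupp.single_apply] at h9
              omega
            · have h9 := congrArg (fun t => t l) heq
              simp [Finsupp.tsub_apply, Finsupp.single_apply,
                if_neg (fun h : i = l => hl h.symm)] at h9
              omega
        · intro h; exact absurd hsupp h
      rw [hp i] at hco
      simp only [coeff_zero] at hco
      have hne : ((s i : k)) ≠ 0 := Nat.cast_ne_zero.mpr hi
      exact (mul_eq_zero.mp hco.symm).resolve_right hne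
    · exact notMem_support_iff.mp hsupp

lemma eq_C_of_totalDegree_eq_zero {p : MvPolynomial (Fin 2) k}
    (h : p.totalDegree = 0) : ∃ c : k, p = C c := by
  refine ⟨coeff 0 p, ?_⟩
  ext s
  rw [coeff_C]
  by_cases hs : (0 : Fin 2 →₀ ℕ) = s
  · rw [if_pos hs, ← hs]
  · rw [if_neg hs]
    by_contra hcs
    have h2 : (s.sum fun _ e => e) ≤ 0 := h ▸ le_totalDegree (mem_support_iff.mpr hcs)
    rw [finsupp_sum_eq] at h2
    apply hs
    ext j
    fin_cases j <;> simp <;> omega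

lemma isUnit_const {p : MvPolynomial (Fin 2) k} (hu : IsUnit p) :
    ∃ c : k, c ≠ 0 ∧ p = C c := by
  obtain ⟨u, rfl⟩ := hu
  have h1 : (u : MvPolynomial (Fin 2) k) * ↑u⁻¹ = 1 := u.mul_inv
  have hp : (u : MvPolynomial (Fin 2) k) ≠ 0 := u.ne_zero
  have hq : ((u⁻¹ : _) : MvPolynomial (Fin 2) k) ≠ 0 := u⁻¹.ne_zero
  have hdeg : (u : MvPolynomial (Fin 2) k).totalDegree = 0 := by
    have := tdeg_mul hp hq
    rw [h1, totalDegree_one] at this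
    omega
  obtain ⟨c, hc⟩ := eq_C_of_totalDegree_eq_zero hdeg
  refine ⟨c, fun h0 => ?_, hc⟩
  rw [h0, map_zero] at hc
  exact hp hc


lemma tdeg_le_of_dvd {p q : MvPolynomial (Fin 2) k} (h : p ∣ q) (hq : q ≠ 0) :
    p.totalDegree ≤ q.totalDegree := by
  obtain ⟨r, rfl⟩ := h
  have hp : p ≠ 0 := fun h0 => hq (by rw [h0, zero_mul])
  have hr : r ≠ 0 := fun h0 => hq (by rw [h0, mul_zero])
  rw [tdeg_mul hp hr]
  omega

lemma core (j : Fin 2) (a b P Q P' Q' Φ u u' v : MvPolynomial (Fin 2) k)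
    (hΦ : Φ ≠ 0) (hQ : Q ≠ 0)
    (hE : pderiv j P * Φ - P * pderiv j Φ = u * Φ - Q * v)
    (hE' : pderiv j P' * Φ - P' * pderiv j Φ = u' * Φ - Q' * v)
    (hS : P * Q' = P' * Q)
    (hrel : a * P + b * Q = 0) :
    (a * u' + b * pderiv j Q') * Q = Q' * (a * u + b * pderiv j Q) := by
  have hSy : pderiv j P * Q' + P * pderiv j Q' = pderiv j P' * Q + P' * pderiv j Q := by
    have h0 : pderiv j (P * Q') = pderiv j (P' * Q) := by rw [hS]
    rw [pderiv_mul, pderiv_mul] at h0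
    exact h0
  have h1 : Φ * ((u' * Q - Q' * u) * Q - (pderiv j Q' * Q - Q' * pderiv j Q) * P) = 0 := by
    linear_combination (Q * Q') * hE - Q ^ 2 * hE' +
      (Φ * pderiv j Q + Q * pderiv j Φ) * hS - (Φ * Q) * hSy
  have h2 : (u' * Q - Q' * u) * Q = (pderiv j Q' * Q - Q' * pderiv j Q) * P := by
    rcases mul_eq_zero.mp h1 with h | h
    · exact absurd h hΦ
    · linear_combination h
  have h3 : ((a * u' + b * pderiv j Q') * Q - Q' * (a * u + b * pderiv j Q)) * Q = 0 := by
    linear_combination a * h2 + (pderiv j Q' * Q - Q' * pderiv j Q) * hrel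
  rcases mul_eq_zero.mp h3 with h | h
  · linear_combination h
  · exact absurd h hQ

lemma exists_two_relations (d N : ℕ) (hd : 0 < d) (hN : 2 + d * (d + 1) / 2 ≤ N)
    (lam : Fin N → MvPolynomial (Fin 2) k) (hdeg : ∀ i, (lam i).totalDegree ≤ d - 1) :
    ∃ c c' : Fin N → k, (∑ i, c i • lam i) = 0 ∧ (∑ i, c' i • lam i) = 0 ∧
      c ≠ 0 ∧ ∀ t : k, c' ≠ t • c := by
  classical
  set T : Finset (Fin 2 →₀ ℕ) := (Finset.range d).biUnion
    (fun n => (Finset.HasAntidiagonal.antidiagonal n).image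
      (fun pq => Finsupp.single 0 pq.1 + Finsupp.single 1 pq.2)) with hT
  have hTcard : T.card ≤ d * (d + 1) / 2 := by
    have h1 : T.card ≤ ∑ n ∈ Finset.range d, (n + 1) := by
      refine (Finset.card_biUnion_le).trans (Finset.sum_le_sum fun n _ => ?_)
      exact (Finset.card_image_le).trans (le_of_eq (Finset.Nat.card_antidiagonal n))
    have h2 : (∑ n ∈ Finset.range d, n) * 2 = d * (d - 1) := Finset.sum_range_id_mul_two d
    have h3 : ∑ n ∈ Finset.range d, (n + 1) = (∑ n ∈ Finset.range d, n) + d := by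
      rw [Finset.sum_add_distrib, Finset.sum_const, Finset.card_range, smul_eq_mul, mul_one]
    obtain ⟨e, rfl⟩ : ∃ e, d = e + 1 := ⟨d - 1, by omega⟩
    have h4 : (e + 1) * (e + 1 - 1) + 2 * (e + 1) = (e + 1) * (e + 1 + 1) := by
      simp only [Nat.add_sub_cancel]; ring
    have h5 : T.card * 2 ≤ (e + 1) * (e + 1 + 1) := by omega
    omega
  set T' : Finset (MvPolynomial (Fin 2) k) :=
    T.image (fun s => (monomial s (1 : k))) with hT'
  set W : Submodule k (MvPolynomial (Fin 2) k) := Submodule.span k (T' : Set _) with hW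
  have hlamW : ∀ i, lam i ∈ W := by
    intro i
    rw [(lam i).as_sum]
    refine Submodule.sum_mem _ fun v hv => ?_
    have hvT : v ∈ T := by
      have hvd : v 0 + v 1 ≤ d - 1 := by
        have := le_totalDegree hv
        rw [finsupp_sum_eq] at this
        exact this.trans (hdeg i)
      rw [hT]
      refine Finset.mem_biUnion.mpr ⟨v 0 + v 1, Finset.mem_range.mpr (by omega), ?_⟩
      refine Finset.mem_image.mpr ⟨(v 0, v 1), Finset.HasAntidiagonal.mem_antidiagonal.mpr rfl, ?_⟩
      ext j
      have hcase : ∀ t : Fin 2, t = 0 ∨ t = 1 := by decide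
      rcases hcase j with rfl | rfl <;> simp [Finsupp.single_apply]
    have hmono : monomial v (coeff v (lam i)) = coeff v (lam i) • monomial v (1 : k) := by
      rw [smul_monomial, smul_eq_mul, mul_one]
    rw [hmono]
    exact Submodule.smul_mem _ _ (Submodule.subset_span
      (Finset.mem_coe.mpr (Finset.mem_image.mpr ⟨v, hvT, rfl⟩)))
  set L : (Fin N → k) →ₗ[k] MvPolynomial (Fin 2) k :=
    { toFun := fun e => ∑ i, e i • lam i
      map_add' := by
        intro x y
        rw [← Finset.sum_add_distrib]
        exact Finset.sum_congr rfl fun i _ => by rw [Pi.add_apply, add_smul]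
      map_smul' := by
        intro t x
        simp only [RingHom.id_apply, Finset.smul_sum, Pi.smul_apply, smul_smul,
          smul_eq_mul] } with hL
  haveI : FiniteDimensional k W := FiniteDimensional.span_of_finite k T'.finite_toSet
  have hrange : LinearMap.range L ≤ W := by
    rintro _ ⟨e, rfl⟩
    simp only [hL, LinearMap.coe_mk, AddHom.coe_mk]
    exact Submodule.sum_mem _ fun i _ => Submodule.smul_mem _ _ (hlamW i)
  have hrk : Module.finrank k (LinearMap.range L) ≤ d * (d + 1) / 2 := by
    have h6 : T'.card ≤ d * (d + 1) / 2 := by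
      rw [hT']; exact (Finset.card_image_le).trans hTcard
    exact (Submodule.finrank_mono hrange).trans ((finrank_span_finset_le_card T').trans h6)
  have hdim : Module.finrank k (LinearMap.range L) + Module.finrank k (LinearMap.ker L) = N := by
    rw [LinearMap.finrank_range_add_finrank_ker L, Module.finrank_fintype_fun_eq_card,
      Fintype.card_fin]
  have hker2 : 2 ≤ Module.finrank k (LinearMap.ker L) := by omega
  set bb := Module.finBasis k (LinearMap.ker L) with hbb
  set i0 : Fin (Module.finrank k (LinearMap.ker L)) := ⟨0, by omega⟩ with hi0
  set i1 : Fin (Module.finrank k (LinearMap.ker L)) := ⟨1, by omega⟩ with hi1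
  refine ⟨(bb i0 : Fin N → k), (bb i1 : Fin N → k), ?_, ?_, ?_, ?_⟩
  · have := LinearMap.mem_ker.mp (bb i0).2
    simpa only [hL, LinearMap.coe_mk, AddHom.coe_mk] using this
  · have := LinearMap.mem_ker.mp (bb i1).2
    simpa only [hL, LinearMap.coe_mk, AddHom.coe_mk] using this
  · intro h
    exact bb.ne_zero i0 (Subtype.ext h)
  · intro t h
    have h2 : (bb i1 : Fin N → k) = ((t • bb i0 : LinearMap.ker L) : Fin N → k) := by
      rw [h]; rfl
    have h3 : bb i1 = t • bb i0 := Subtype.ext h2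
    have h4 := congrArg (fun z => (bb.repr z) i1) h3
    simp only [Module.Basis.repr_self, map_smul, Finsupp.smul_apply] at h4
    rw [Finsupp.single_eq_same, Finsupp.single_eq_of_ne' (by simp [hi0, hi1]),
      smul_zero] at h4
    exact one_ne_zero h4

lemma deg_ge_one {p : MvPolynomial (Fin 2) k} (hp : Irreducible p) : 1 ≤ p.totalDegree := by
  by_contra h
  push_neg at h
  obtain ⟨c0, hc0⟩ := eq_C_of_totalDegree_eq_zero (p := p) (by omega)
  have hc0ne : c0 ≠ 0 := fun h0 => hp.ne_zero (by rw [hc0, h0, map_zero])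
  exact hp.not_isUnit (hc0 ▸ (hc0ne.isUnit.map C))

lemma residue [CharZero k] {N : ℕ} (f : Fin N → MvPolynomial (Fin 2) k)
    (hirr : ∀ i, Irreducible (f i)) (hprop : ∀ i j, i ≠ j → ∀ c : k, f i ≠ C c * f j)
    (e : Fin N → k)
    (hP : (∑ i, C (e i) * (pderiv 0 (f i) * ∏ l ∈ Finset.univ.erase i, f l))
      = (0 : MvPolynomial (Fin 2) k))
    (hQ : (∑ i, C (e i) * (pderiv 1 (f i) * ∏ l ∈ Finset.univ.erase i, f l))
      = (0 : MvPolynomial (Fin 2) k)) :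
    e = 0 := by
  classical
  funext i
  show e i = 0
  by_contra hei
  have hprime : Prime (f i) := UniqueFactorizationMonoid.irreducible_iff_prime.mp (hirr i)
  have hnotdvd : ¬ f i ∣ ∏ l ∈ Finset.univ.erase i, f l := by
    intro hdvd
    obtain ⟨l, hl, hdl⟩ := hprime.exists_mem_finset_dvd hdvd
    have hli : l ≠ i := (Finset.mem_erase.mp hl).1
    obtain ⟨r, hr⟩ := hdl
    have hru : IsUnit r := by
      rcases (hirr l).isUnit_or_isUnit hr with h | h
      · exact absurd h (hirr i).not_isUnit
      · exact h
    obtain ⟨cu, hcune, hcu⟩ := isUnit_const hru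
    exact hprop l i hli cu (by rw [hr, hcu, mul_comm])
  have hkey : ∀ (jj : Fin 2),
      (∑ t, C (e t) * (pderiv jj (f t) * ∏ l ∈ Finset.univ.erase t, f l)
        = (0 : MvPolynomial (Fin 2) k)) → pderiv jj (f i) = 0 := by
    intro jj hsum
    have hsplit := Finset.add_sum_erase Finset.univ
      (fun t => C (e t) * (pderiv jj (f t) * ∏ l ∈ Finset.univ.erase t, f l))
      (Finset.mem_univ i)
    rw [hsum] at hsplit
    have hdvd1 : f i ∣ C (e i) * (pderiv jj (f i) * ∏ l ∈ Finset.univ.erase i, f l) := by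
      have h2 : C (e i) * (pderiv jj (f i) * ∏ l ∈ Finset.univ.erase i, f l)
          = - ∑ t ∈ Finset.univ.erase i, C (e t)
              * (pderiv jj (f t) * ∏ l ∈ Finset.univ.erase t, f l) := by
        linear_combination hsplit
      rw [h2]
      refine dvd_neg.mpr (Finset.dvd_sum fun t ht => ?_)
      have hit : i ∈ Finset.univ.erase t :=
        Finset.mem_erase.mpr ⟨Ne.symm (Finset.mem_erase.mp ht).1, Finset.mem_univ i⟩
      exact dvd_mul_of_dvd_right (dvd_mul_of_dvd_right (Finset.dvd_prod_of_mem f hit) _) _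
    have hdvd2 : f i ∣ pderiv jj (f i) * ∏ l ∈ Finset.univ.erase i, f l := by
      have h3 : pderiv jj (f i) * ∏ l ∈ Finset.univ.erase i, f l
          = C (e i)⁻¹ * (C (e i) * (pderiv jj (f i) * ∏ l ∈ Finset.univ.erase i, f l)) := by
        rw [← mul_assoc, ← map_mul, inv_mul_cancel₀ hei, map_one, one_mul]
      rw [h3]
      exact dvd_mul_of_dvd_right hdvd1 _
    rcases hprime.dvd_mul.mp hdvd2 with h | h
    · by_contra hne
      have hd1 := tdeg_le_of_dvd h hne
      have hd2 := tdeg_pderiv_le jj (f i)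
      have hd3 := deg_ge_one (hirr i)
      omega
    · exact absurd h hnotdvd
  have hall : ∀ jj : Fin 2, pderiv jj (f i) = 0 := by
    intro jj
    have hcase : ∀ t : Fin 2, t = 0 ∨ t = 1 := by decide
    rcases hcase jj with rfl | rfl
    · exact hkey 0 hP
    · exact hkey 1 hQ
  obtain ⟨c0, hc0⟩ := eq_C_of_pderiv_eq_zero (f i) hall
  have hc0ne : c0 ≠ 0 := fun h0 => (hirr i).ne_zero (by rw [hc0, h0, map_zero])
  exact (hirr i).not_isUnit (hc0 ▸ (hc0ne.isUnit.map C))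

lemma closedness {N : ℕ} (f : Fin N → MvPolynomial (Fin 2) k) (e : Fin N → k) :
    pderiv 1 (∑ i, C (e i) * (pderiv 0 (f i) * ∏ l ∈ Finset.univ.erase i, f l)) * (∏ l, f l)
      - (∑ i, C (e i) * (pderiv 0 (f i) * ∏ l ∈ Finset.univ.erase i, f l)) * pderiv 1 (∏ l, f l)
    = pderiv 0 (∑ i, C (e i) * (pderiv 1 (f i) * ∏ l ∈ Finset.univ.erase i, f l)) * (∏ l, f l)
      - (∑ i, C (e i) * (pderiv 1 (f i) * ∏ l ∈ Finset.univ.erase i, f l)) * pderiv 0 (∏ l, f l) := by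
  classical
  rw [map_sum, map_sum, Finset.sum_mul, Finset.sum_mul, Finset.sum_mul, Finset.sum_mul,
    ← Finset.sum_sub_distrib, ← Finset.sum_sub_distrib]
  refine Finset.sum_congr rfl fun i _ => ?_
  have hsplit : (∏ l, f l) = f i * ∏ l ∈ Finset.univ.erase i, f l :=
    (Finset.mul_prod_erase _ _ (Finset.mem_univ i)).symm
  rw [hsplit, pderiv_C_mul, pderiv_C_mul, pderiv_mul, pderiv_mul, pderiv_mul, pderiv_mul]
  have hcomm : pderiv 1 (pderiv 0 (f i)) = pderiv 0 (pderiv 1 (f i)) :=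
    pderiv_pderiv 1 0 (f i)
  linear_combination (C (e i) * (∏ l ∈ Finset.univ.erase i, f l) ^ 2 * f i) * hcomm

end DarbouxAux




open DarbouxAux in
/-- **Darboux's theorem.** If a derivation `D = a·∂x + b·∂y` of `k[x,y]` (with
`deg a, deg b ≤ d`) admits at least `2 + d(d+1)/2` pairwise non-proportional
irreducible eigenvectors, then `D` admits a rational first integral. -/
theorem darboux_rational_first_integral {k : Type*} [Field k] [CharZero k]
    (a b : MvPolynomial (Fin 2) k) (d : ℕ) (hd : 0 < d)
    (ha : a.totalDegree ≤ d) (hb : b.totalDegree ≤ d)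
    (D : Derivation k (MvPolynomial (Fin 2) k) (MvPolynomial (Fin 2) k))
    (hD : ∀ f, D f = a * pderiv (0 : Fin 2) f + b * pderiv (1 : Fin 2) f)
    (N : ℕ) (hN : 2 + d * (d + 1) / 2 ≤ N)
    (f : Fin N → MvPolynomial (Fin 2) k)
    (hirr : ∀ i, Irreducible (f i))
    (hprop : ∀ i j, i ≠ j → ∀ c : k, f i ≠ C c * f j)
    (heig : ∀ i, ∃ lam : MvPolynomial (Fin 2) k, D (f i) = lam * f i) :
    ∃ F G : MvPolynomial (Fin 2) k, G ≠ 0 ∧ (∀ c : k, F ≠ C c * G) ∧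
      D F * G = F * D G := by
  classical
  by_cases hab : a = 0 ∧ b = 0
  · have hN2 : (2 : ℕ) ≤ N := le_trans (Nat.le_add_right 2 _) hN
    refine ⟨f ⟨0, by omega⟩, f ⟨1, by omega⟩, (hirr _).ne_zero,
      fun c => hprop _ _ (by simp [Fin.ext_iff]) c, ?_⟩
    rw [hD, hD, hab.1, hab.2]
    ring
  · have hab' : a ≠ 0 ∨ b ≠ 0 := by tauto
    have hfne : ∀ i, f i ≠ 0 := fun i => (hirr i).ne_zero
    set lam : Fin N → MvPolynomial (Fin 2) k := fun i => (heig i).choose with hlamdef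
    have hlam : ∀ i, D (f i) = lam i * f i := fun i => (heig i).choose_spec
    have hlamdeg : ∀ i, (lam i).totalDegree ≤ d - 1 := by
      intro i
      by_cases hz : lam i = 0
      · rw [hz, totalDegree_zero]; exact Nat.zero_le _
      · have h1 : (lam i * f i).totalDegree = (lam i).totalDegree + (f i).totalDegree :=
          tdeg_mul hz (hfne i)
        have h2 : (D (f i)).totalDegree ≤ d + ((f i).totalDegree - 1) := by
          rw [hD]
          refine (totalDegree_add _ _).trans (max_le ?_ ?_)
          · exact (totalDegree_mul _ _).trans (Nat.add_le_add ha (tdeg_pderiv_le _ _))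
          · exact (totalDegree_mul _ _).trans (Nat.add_le_add hb (tdeg_pderiv_le _ _))
        rw [hlam i, h1] at h2
        have h3 := deg_ge_one (hirr i)
        omega
    obtain ⟨c, c', hLc, hLc', hc0, hcc'⟩ := exists_two_relations d N hd hN lam hlamdeg
    set Φ : MvPolynomial (Fin 2) k := ∏ l, f l with hΦdef
    set PP : (Fin N → k) → MvPolynomial (Fin 2) k :=
      fun e => ∑ i, C (e i) * (pderiv 0 (f i) * ∏ l ∈ Finset.univ.erase i, f l) with hPPdef
    set QQ : (Fin N → k) → MvPolynomial (Fin 2) k :=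
      fun e => ∑ i, C (e i) * (pderiv 1 (f i) * ∏ l ∈ Finset.univ.erase i, f l) with hQQdef
    have hΦ : Φ ≠ 0 := by
      rw [hΦdef]
      exact Finset.prod_ne_zero_iff.mpr fun i _ => hfne i
    have hE : ∀ e : Fin N → k,
        pderiv 1 (PP e) * Φ - PP e * pderiv 1 Φ
          = pderiv 0 (QQ e) * Φ - QQ e * pderiv 0 Φ := by
      intro e
      simp only [hPPdef, hQQdef, hΦdef]
      exact closedness f e
    have hrel : ∀ e : Fin N → k, (∑ i, e i • lam i) = 0 → a * PP e + b * QQ e = 0 := by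
      intro e he
      have hkey : a * PP e + b * QQ e = (∑ i, C (e i) * lam i) * Φ := by
        simp only [hPPdef, hQQdef, hΦdef]
        rw [Finset.mul_sum, Finset.mul_sum, ← Finset.sum_add_distrib, Finset.sum_mul]
        refine Finset.sum_congr rfl fun i _ => ?_
        have h1 : f i * ∏ l ∈ Finset.univ.erase i, f l = ∏ l, f l :=
          Finset.mul_prod_erase _ _ (Finset.mem_univ i)
        have h2 : a * pderiv 0 (f i) + b * pderiv 1 (f i) = lam i * f i := by
          rw [← hD]; exact hlam i
        linear_combination (C (e i) * ∏ l ∈ Finset.univ.erase i, f l) * h2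
          + (C (e i) * lam i) * h1
      rw [hkey]
      have h0 : (∑ i, C (e i) * lam i) = 0 := by
        rw [← he]
        exact Finset.sum_congr rfl fun i _ => (smul_eq_C_mul _ _).symm
      rw [h0, zero_mul]
    have hS : ∀ e e' : Fin N → k, (∑ i, e i • lam i) = 0 → (∑ i, e' i • lam i) = 0 →
        PP e * QQ e' = PP e' * QQ e := by
      intro e e' he he'
      rcases hab' with ha0 | hb0
      · have h4 : a * (PP e * QQ e' - PP e' * QQ e) = 0 := by
          linear_combination QQ e' * hrel e he - QQ e * hrel e' he'
        rcases mul_eq_zero.mp h4 with h | h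
        · exact absurd h ha0
        · linear_combination h
      · have h4 : b * (PP e * QQ e' - PP e' * QQ e) = 0 := by
          linear_combination PP e * hrel e' he' - PP e' * hrel e he
        rcases mul_eq_zero.mp h4 with h | h
        · exact absurd h hb0
        · linear_combination h
    have hres : ∀ e : Fin N → k, PP e = 0 → QQ e = 0 → e = 0 := by
      intro e h1 h2
      refine residue f hirr hprop e ?_ ?_
      · simpa only [hPPdef] using h1
      · simpa only [hQQdef] using h2
    have hlin : ∀ (e e' : Fin N → k) (t : k), (∑ i, e i • lam i) = 0 →
        (∑ i, e' i • lam i) = 0 → (∑ i, (e' i - t * e i) • lam i) = 0 := by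
      intro e e' t he he'
      have hstep : (∑ i, (e' i - t * e i) • lam i)
          = (∑ i, e' i • lam i) - t • (∑ i, e i • lam i) := by
        rw [Finset.smul_sum, ← Finset.sum_sub_distrib]
        exact Finset.sum_congr rfl fun i _ => by rw [sub_smul, smul_smul]
      rw [hstep, he, he', smul_zero, sub_zero]
    have hPPlin : ∀ (e e' : Fin N → k) (t : k),
        PP (fun z => e' z - t * e z) = PP e' - C t * PP e := by
      intro e e' t
      simp only [hPPdef]
      rw [Finset.mul_sum, ← Finset.sum_sub_distrib]
      refine Finset.sum_congr rfl fun i _ => ?_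
      rw [map_sub, map_mul]
      ring
    have hQQlin : ∀ (e e' : Fin N → k) (t : k),
        QQ (fun z => e' z - t * e z) = QQ e' - C t * QQ e := by
      intro e e' t
      simp only [hQQdef]
      rw [Finset.mul_sum, ← Finset.sum_sub_distrib]
      refine Finset.sum_congr rfl fun i _ => ?_
      rw [map_sub, map_mul]
      ring
    have hPQc : PP c ≠ 0 ∨ QQ c ≠ 0 := by
      by_contra h
      push_neg at h
      exact hc0 (hres c h.1 h.2)
    rcases hPQc with hPc | hQc
    · refine ⟨PP c', PP c, hPc, ?_, ?_⟩
      · intro t heq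
        have hrel₃ : (∑ i, (c' i - t * c i) • lam i) = 0 := hlin c c' t hLc hLc'
        have hP₃ : PP (fun z => c' z - t * c z) = 0 := by
          rw [hPPlin c c' t, heq, sub_self]
        have hQ₃ : QQ (fun z => c' z - t * c z) = 0 := by
          have h5 := hS c (fun z => c' z - t * c z) hLc hrel₃
          rw [hP₃, zero_mul] at h5
          exact (mul_eq_zero.mp h5).resolve_left hPc
        have h6 := hres (fun z => c' z - t * c z) hP₃ hQ₃
        apply hcc' t
        funext z
        have h7 := congrFun h6 z
        simp only [Pi.zero_apply] at h7
        rw [Pi.smul_apply, smul_eq_mul]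
        exact sub_eq_zero.mp h7
      · rw [hD (PP c'), hD (PP c)]
        have hcore := core (k := k) 0 b a (QQ c) (PP c) (QQ c') (PP c') Φ
          (pderiv 1 (PP c)) (pderiv 1 (PP c')) (pderiv 1 Φ) hΦ hPc
          (hE c).symm (hE c').symm
          (by linear_combination - hS c c' hLc hLc')
          (by linear_combination hrel c hLc)
        linear_combination hcore
    · refine ⟨QQ c', QQ c, hQc, ?_, ?_⟩
      · intro t heq
        have hrel₃ : (∑ i, (c' i - t * c i) • lam i) = 0 := hlin c c' t hLc hLc'
        have hQ₃ : QQ (fun z => c' z - t * c z) = 0 := by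
          rw [hQQlin c c' t, heq, sub_self]
        have hP₃ : PP (fun z => c' z - t * c z) = 0 := by
          have h5 := hS c (fun z => c' z - t * c z) hLc hrel₃
          rw [hQ₃, mul_zero] at h5
          exact (mul_eq_zero.mp h5.symm).resolve_right hQc
        have h6 := hres (fun z => c' z - t * c z) hP₃ hQ₃
        apply hcc' t
        funext z
        have h7 := congrFun h6 z
        simp only [Pi.zero_apply] at h7
        rw [Pi.smul_apply, smul_eq_mul]
        exact sub_eq_zero.mp h7
      · rw [hD (QQ c'), hD (QQ c)]
        exact core (k := k) 1 a b (PP c) (QQ c) (PP c') (QQ c') Φ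
          (pderiv 0 (QQ c)) (pderiv 0 (QQ c')) (pderiv 0 Φ) hΦ hQc
          (hE c) (hE c') (hS c c' hLc hLc') (hrel c hLc)
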